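/- arXiv:2106.13261 — 3 statements merged into one kernel-verified Lean document; each statement's English description precedes it below -/
import Mathlib

section
/- The extended metric d on F(X) is complete: every Cauchy sequence in F(X) converges. -/
open Set

/-- An element of the generic ℝ-forest `F(X)` (simplified): a 1-Lipschitz function
from a compact subset of `ℝ≥0` containing `0` into a metric space `X`. -/
structure FPath (X : Type*) [MetricSpace X] where
  dom : Set ℝ
  compact' : IsCompact dom
  zero_mem : (0 : ℝ) ∈ dom
  subset_Ici : dom ⊆ Set.Ici 0
  toFun : ℝ → X
  lip : LipschitzOnWith 1 toFun dom

namespace FPath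

variable {X : Type*} [MetricSpace X]

/-- The length `|K| = sup π(K)`. -/
noncomputable def len (K : FPath X) : ℝ := sSup K.dom

/-- `K` and `K'` agree up to `r`: `r` is in both domains and the restrictions to `[0,r]` coincide. -/
def Agree (K K' : FPath X) (r : ℝ) : Prop :=
  r ∈ K.dom ∧ r ∈ K'.dom ∧ K.dom ∩ Set.Icc 0 r = K'.dom ∩ Set.Icc 0 r ∧
    Set.EqOn K.toFun K'.toFun (K.dom ∩ Set.Icc 0 r)

/-- The length `|K ⊓ K'|` of the longest common initial segment. -/
noncomputable def meetLen (K K' : FPath X) : ℝ := sSup {r | Agree K K' r}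

/-- `K` and `K'` are in the same finite distance component. -/
def FinDist (K K' : FPath X) : Prop := K.toFun 0 = K'.toFun 0

/-- The forest metric `d(K,K') = |K| + |K'| - 2|K ⊓ K'|` (meaningful for finite-distance pairs). -/
noncomputable def tdist (K K' : FPath X) : ℝ := K.len + K'.len - 2 * meetLen K K'

/-- `L ⊑ K`: `L` is an initial segment of `K`. -/
def InitSeg (L K : FPath X) : Prop :=
  L.dom = K.dom ∩ Set.Icc 0 L.len ∧ Set.EqOn L.toFun K.toFun L.dom

/-- `L` belongs to the interval `[K,K'] = {L : K⊓K' ⊑ L ⊑ K or K⊓K' ⊑ L ⊑ K'}`. -/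
def MemInterval (K K' L : FPath X) : Prop :=
  ∃ M : FPath X, M.len = meetLen K K' ∧ InitSeg M K ∧ InitSeg M K' ∧
    ((InitSeg M L ∧ InitSeg L K) ∨ (InitSeg M L ∧ InitSeg L K'))

/-- The endpoint value `K_X(|K|)`. -/
noncomputable def endpt (K : FPath X) : X := K.toFun K.len

/-- Distance from `A` to the interval `[K,K']`. -/
noncomputable def idist (A K K' : FPath X) : ℝ :=
  sInf {r | ∃ L : FPath X, MemInterval K K' L ∧ r = A.tdist L}

/-- The length of the longest common initial segment of a set of paths. -/
noncomputable def setMeetLen (S : Set (FPath X)) : ℝ :=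
  sSup {r | ∀ K ∈ S, ∀ K' ∈ S, Agree K K' r}

/-- The diameter of a set of paths. -/
noncomputable def setDiam (S : Set (FPath X)) : ℝ :=
  sSup {r | ∃ K ∈ S, ∃ K' ∈ S, r = K.tdist K'}

end FPath
namespace FPath

variable {X : Type*} [MetricSpace X]

lemma dom_nonempty (K : FPath X) : K.dom.Nonempty := ⟨0, K.zero_mem⟩
lemma dom_bddAbove (K : FPath X) : BddAbove K.dom := K.compact'.bddAbove
lemma dom_closed (K : FPath X) : IsClosed K.dom := K.compact'.isClosed
lemma le_len {K : FPath X} {t : ℝ} (ht : t ∈ K.dom) : t ≤ K.len :=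
  le_csSup K.dom_bddAbove ht
lemma len_mem (K : FPath X) : K.len ∈ K.dom := K.compact'.sSup_mem K.dom_nonempty
lemma len_nonneg (K : FPath X) : 0 ≤ K.len := le_len K.zero_mem
lemma nonneg_of_mem {K : FPath X} {t : ℝ} (ht : t ∈ K.dom) : 0 ≤ t := K.subset_Ici ht

lemma dist_fun_le {K : FPath X} {s t : ℝ} (hs : s ∈ K.dom) (ht : t ∈ K.dom) :
    dist (K.toFun s) (K.toFun t) ≤ |s - t| := by
  have := (lipschitzOnWith_iff_dist_le_mul.1 K.lip) s hs t ht
  simpa [Real.dist_eq] using this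

lemma Agree.symm {K K' : FPath X} {r : ℝ} (h : Agree K K' r) : Agree K' K r :=
  ⟨h.2.1, h.1, h.2.2.1.symm, fun x hx => (h.2.2.2 (h.2.2.1 ▸ hx)).symm⟩

lemma agree_zero {K K' : FPath X} (h : FinDist K K') : Agree K K' 0 := by
  have e : ∀ (A : FPath X), A.dom ∩ Set.Icc (0:ℝ) 0 = {0} := by
    intro A
    rw [Set.Icc_self]
    exact Set.inter_eq_self_of_subset_right (by simpa using A.zero_mem)
  refine ⟨K.zero_mem, K'.zero_mem, by rw [e, e], ?_⟩
  rw [e]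
  intro x hx
  rcases hx with rfl
  exact h

lemma Agree.mono {K K' : FPath X} {r r' : ℝ} (h : Agree K K' r) (h1 : r' ∈ K.dom)
    (h2 : r' ≤ r) : Agree K K' r' := by
  have h0 : (0:ℝ) ≤ r' := K.subset_Ici h1
  have key : ∀ x, x ∈ K.dom ∩ Set.Icc 0 r' ↔ x ∈ K'.dom ∩ Set.Icc 0 r' := by
    intro x
    constructor
    · rintro ⟨hx, hx0, hxr⟩
      have : x ∈ K'.dom ∩ Set.Icc 0 r := h.2.2.1 ▸ (⟨hx, hx0, hxr.trans h2⟩ :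
        x ∈ K.dom ∩ Set.Icc 0 r)
      exact ⟨this.1, hx0, hxr⟩
    · rintro ⟨hx, hx0, hxr⟩
      have : x ∈ K.dom ∩ Set.Icc 0 r := h.2.2.1 ▸ (⟨hx, hx0, hxr.trans h2⟩ :
        x ∈ K'.dom ∩ Set.Icc 0 r)
      exact ⟨this.1, hx0, hxr⟩
  have hdom : K.dom ∩ Set.Icc 0 r' = K'.dom ∩ Set.Icc 0 r' := Set.ext key
  have h1' : r' ∈ K'.dom := ((key r').1 ⟨h1, h0, le_refl _⟩).1
  exact ⟨h1, h1', hdom, fun x hx => h.2.2.2 ⟨hx.1, hx.2.1, hx.2.2.trans h2⟩⟩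

lemma Agree.trans {A B C : FPath X} {r : ℝ} (h1 : Agree A B r) (h2 : Agree B C r) :
    Agree A C r :=
  ⟨h1.1, h2.2.1, h1.2.2.1.trans h2.2.2.1,
    fun x hx => (h1.2.2.2 hx).trans (h2.2.2.2 (h1.2.2.1 ▸ hx))⟩

lemma bddAbove_agree (K K' : FPath X) : BddAbove {r | Agree K K' r} :=
  K.dom_bddAbove.mono fun r hr => hr.1

lemma le_meetLen {K K' : FPath X} {r : ℝ} (h : Agree K K' r) : r ≤ meetLen K K' :=
  le_csSup (bddAbove_agree K K') h

lemma agree_meetLen {K K' : FPath X} (h : FinDist K K') : Agree K K' (meetLen K K') := by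
  have hne : Set.Nonempty {r | Agree K K' r} := ⟨0, agree_zero h⟩
  have hbdd := bddAbove_agree K K'
  obtain ⟨c, hmono, hc, hcS⟩ := exists_seq_tendsto_sSup hne hbdd
  set s := sSup {r | Agree K K' r} with hs
  have hcle : ∀ n, c n ≤ s := fun n => le_csSup hbdd (hcS n)
  have hc0 : ∀ n, 0 ≤ c n := fun n => K.subset_Ici (hcS n).1
  have hsK : s ∈ K.dom :=
    K.dom_closed.mem_of_tendsto hc (Filter.Eventually.of_forall fun n => (hcS n).1)
  have hsK' : s ∈ K'.dom :=
    K'.dom_closed.mem_of_tendsto hc (Filter.Eventually.of_forall fun n => (hcS n).2.1)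
  have hs0 : (0:ℝ) ≤ s := K.subset_Ici hsK
  have hlt : ∀ x, x < s → x ∈ K.dom → x ∈ K'.dom ∧ K.toFun x = K'.toFun x := by
    intro x hx hxK
    rcases lt_or_ge x 0 with hx0 | hx0
    · exact absurd (K.subset_Ici hxK) (by simpa using hx0)
    obtain ⟨n, hn⟩ : ∃ n, x < c n := (hc.eventually (eventually_gt_nhds hx)).exists
    have hmem : x ∈ K.dom ∩ Set.Icc 0 (c n) := ⟨hxK, hx0, hn.le⟩
    exact ⟨((hcS n).2.2.1 ▸ hmem).1, (hcS n).2.2.2 hmem⟩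
  have hlt' : ∀ x, x < s → x ∈ K'.dom → x ∈ K.dom := by
    intro x hx hxK'
    rcases lt_or_ge x 0 with hx0 | hx0
    · exact absurd (K'.subset_Ici hxK') (by simpa using hx0)
    obtain ⟨n, hn⟩ : ∃ n, x < c n := (hc.eventually (eventually_gt_nhds hx)).exists
    have hmem : x ∈ K'.dom ∩ Set.Icc 0 (c n) := ⟨hxK', hx0, hn.le⟩
    exact ((hcS n).2.2.1.symm ▸ hmem).1
  have hdom : K.dom ∩ Set.Icc 0 s = K'.dom ∩ Set.Icc 0 s := by
    ext x
    constructor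
    · rintro ⟨hx, hx0, hxs⟩
      rcases eq_or_lt_of_le hxs with rfl | hxs'
      · exact ⟨hsK', hx0, le_refl _⟩
      · exact ⟨(hlt x hxs' hx).1, hx0, hxs⟩
    · rintro ⟨hx, hx0, hxs⟩
      rcases eq_or_lt_of_le hxs with rfl | hxs'
      · exact ⟨hsK, hx0, le_refl _⟩
      · exact ⟨hlt' x hxs' hx, hx0, hxs⟩
  have heqs : K.toFun s = K'.toFun s := by
    have hb : ∀ n, dist (K.toFun s) (K'.toFun s) ≤ 2 * (s - c n) := by
      intro n
      have h1 : dist (K.toFun s) (K.toFun (c n)) ≤ |s - c n| :=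
        dist_fun_le hsK (hcS n).1
      have h2 : dist (K'.toFun (c n)) (K'.toFun s) ≤ |c n - s| :=
        dist_fun_le (hcS n).2.1 hsK'
      have h3 : K.toFun (c n) = K'.toFun (c n) :=
        (hcS n).2.2.2 ⟨(hcS n).1, hc0 n, le_refl _⟩
      calc dist (K.toFun s) (K'.toFun s)
          ≤ dist (K.toFun s) (K.toFun (c n)) + dist (K'.toFun (c n)) (K'.toFun s) := by
            rw [h3]; exact dist_triangle _ _ _
        _ ≤ |s - c n| + |c n - s| := add_le_add h1 h2
        _ = 2 * (s - c n) := by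
            rw [abs_of_nonneg (by linarith [hcle n]), abs_of_nonpos (by linarith [hcle n])]
            ring
    have hlim : Filter.Tendsto (fun n => 2 * (s - c n)) Filter.atTop (nhds 0) := by
      have : Filter.Tendsto (fun n => 2 * (s - c n)) Filter.atTop (nhds (2 * (s - s))) :=
        (Filter.Tendsto.const_mul 2 ((tendsto_const_nhds).sub hc))
      simpa using this
    have : dist (K.toFun s) (K'.toFun s) ≤ 0 :=
      ge_of_tendsto hlim (Filter.Eventually.of_forall hb)
    exact dist_le_zero.1 this
  refine ⟨hsK, hsK', hdom, ?_⟩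
  rintro x ⟨hx, hx0, hxs⟩
  rcases eq_or_lt_of_le hxs with rfl | hxs'
  · exact heqs
  · exact (hlt x hxs' hx).2

lemma meetLen_le_len {K K' : FPath X} (h : FinDist K K') : meetLen K K' ≤ K.len :=
  le_len (agree_meetLen h).1

lemma meetLen_le_len' {K K' : FPath X} (h : FinDist K K') : meetLen K K' ≤ K'.len :=
  le_len (agree_meetLen h).2.1

lemma meetLen_nonneg {K K' : FPath X} (h : FinDist K K') : 0 ≤ meetLen K K' :=
  le_meetLen (agree_zero h)

lemma meetLen_comm (K K' : FPath X) : meetLen K K' = meetLen K' K := by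
  unfold meetLen
  congr 1
  ext r
  exact ⟨Agree.symm, Agree.symm⟩

lemma tdist_comm (K K' : FPath X) : tdist K K' = tdist K' K := by
  unfold tdist; rw [meetLen_comm]; ring

lemma FinDist.symm {K K' : FPath X} (h : FinDist K K') : FinDist K' K := Eq.symm h
lemma FinDist.trans {A B C : FPath X} (h1 : FinDist A B) (h2 : FinDist B C) :
    FinDist A C := Eq.trans h1 h2

lemma min_meetLen_le {A B C : FPath X} (hAB : FinDist A B) (hBC : FinDist B C) :
    min (meetLen A B) (meetLen B C) ≤ meetLen A C := by
  have h1 := agree_meetLen hAB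
  have h2 := agree_meetLen hBC
  rcases le_total (meetLen A B) (meetLen B C) with hle | hle
  · rw [min_eq_left hle]
    exact le_meetLen (h1.trans (h2.mono h1.2.1 hle))
  · rw [min_eq_right hle]
    have hm2A : meetLen B C ∈ A.dom := by
      have : meetLen B C ∈ B.dom ∩ Set.Icc 0 (meetLen A B) :=
        ⟨h2.1, B.subset_Ici h2.1, hle⟩
      exact (h1.2.2.1.symm ▸ this).1
    exact le_meetLen ((h1.mono hm2A hle).trans h2)

lemma len_sub_le_tdist {K K' : FPath X} (h : FinDist K K') :
    K.len - K'.len ≤ tdist K K' := by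
  have := meetLen_le_len' h
  unfold tdist
  linarith

lemma tdist_triangle3 {A B C : FPath X} (hAB : FinDist A B) (hBC : FinDist B C) :
    tdist A C ≤ tdist A B + tdist B C := by
  have h := min_meetLen_le hAB hBC
  have h1 : meetLen A B ≤ B.len := meetLen_le_len' hAB
  have h2 : meetLen B C ≤ B.len := meetLen_le_len hBC
  rcases le_total (meetLen A B) (meetLen B C) with hle | hle
  · rw [min_eq_left hle] at h
    unfold tdist at *
    linarith
  · rw [min_eq_right hle] at h
    unfold tdist at *
    linarith

end FPath
namespace FPath

variable {X : Type*} [MetricSpace X]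

lemma exists_limit [CompleteSpace X] (v : ℕ → FPath X)
    (hFin : ∀ j k, FinDist (v j) (v k))
    (hd : ∀ k j, k ≤ j → tdist (v k) (v j) < (1/2)^k) :
    ∃ L : FPath X, (∀ k, FinDist (v k) L) ∧ ∀ k, tdist (v k) L ≤ 5 * (1/2)^k := by
  classical
  have hpow_pos : ∀ k : ℕ, (0:ℝ) < (1/2)^k := fun k => by positivity
  have hpow_mono : ∀ {k j : ℕ}, k ≤ j → ((1:ℝ)/2)^j ≤ (1/2)^k :=
    fun {k j} h => pow_le_pow_of_le_one (by norm_num) (by norm_num) h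
  -- lengths of the pair differ by at most tdist
  have habs : ∀ k j, k ≤ j → |(v k).len - (v j).len| ≤ (1/2)^k := by
    intro k j hkj
    rw [abs_sub_le_iff]
    constructor
    · linarith [len_sub_le_tdist (hFin k j), hd k j hkj]
    · have := len_sub_le_tdist (hFin j k)
      rw [tdist_comm] at this
      linarith [hd k j hkj]
  -- limit length ℓ
  have hlen_cauchy : CauchySeq (fun k => (v k).len) := by
    rw [Metric.cauchySeq_iff']
    intro ε hε
    obtain ⟨k, hk⟩ := exists_pow_lt_of_lt_one hε (by norm_num : (1:ℝ)/2 < 1)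
    exact ⟨k, fun n hn => lt_of_le_of_lt (by
      rw [Real.dist_eq, abs_sub_comm]; exact habs k n hn) hk⟩
  obtain ⟨ℓ, hℓ⟩ := cauchySeq_tendsto_of_complete hlen_cauchy
  have hℓk : ∀ k, |(v k).len - ℓ| ≤ (1/2)^k := by
    intro k
    have ht : Filter.Tendsto (fun j => |(v k).len - (v j).len|) Filter.atTop
        (nhds (|(v k).len - ℓ|)) := ((tendsto_const_nhds.sub hℓ).abs)
    exact le_of_tendsto ht (Filter.eventually_atTop.2 ⟨k, fun j hj => habs k j hj⟩)
  have hℓ0 : (0:ℝ) ≤ ℓ :=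
    ge_of_tendsto hℓ (Filter.Eventually.of_forall fun k => len_nonneg (v k))
  -- meet lengths
  have hmAgree : ∀ k j, Agree (v k) (v j) (meetLen (v k) (v j)) := fun k j => agree_meetLen (hFin k j)
  have hm_nonneg : ∀ k j, 0 ≤ meetLen (v k) (v j) := fun k j => meetLen_nonneg (hFin k j)
  have hm_lb : ∀ k j, k ≤ j → ℓ - 2 * (1/2)^k ≤ meetLen (v k) (v j) := by
    intro k j hkj
    have h1 := hd k j hkj
    have h2 := hℓk k
    have h3 := hℓk j
    have h4 := hpow_mono hkj
    rw [abs_le] at h2 h3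
    unfold tdist at h1
    linarith [h1, h2.1, h3.1]
  have hcross : ∀ i j t, t ∈ (v i).dom → t ≤ meetLen (v i) (v j) →
      t ∈ (v j).dom ∧ (v i).toFun t = (v j).toFun t := by
    intro i j t ht htm
    have h0 : (0:ℝ) ≤ t := (v i).subset_Ici ht
    have hmem : t ∈ (v i).dom ∩ Set.Icc 0 (meetLen (v i) (v j)) := ⟨ht, h0, htm⟩
    exact ⟨((hmAgree i j).2.2.1 ▸ hmem).1, (hmAgree i j).2.2.2 hmem⟩
  -- τ k = inf of meet lengths
  set T : ℕ → Set ℝ := fun k => {r | ∃ j, k ≤ j ∧ r = meetLen (v k) (v j)} with hT_def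
  have hT_ne : ∀ k, (T k).Nonempty := fun k => ⟨meetLen (v k) (v k), k, le_refl k, rfl⟩
  have hT_bdd : ∀ k, BddBelow (T k) := fun k =>
    ⟨0, by rintro r ⟨j, _, rfl⟩; exact hm_nonneg k j⟩
  set τ : ℕ → ℝ := fun k => sInf (T k) with hτ_def
  have hτ_le_m : ∀ k j, k ≤ j → τ k ≤ meetLen (v k) (v j) := fun k j hkj =>
    csInf_le (hT_bdd k) ⟨j, hkj, rfl⟩
  have hτ_nonneg : ∀ k, 0 ≤ τ k := fun k =>
    le_csInf (hT_ne k) (by rintro r ⟨j, _, rfl⟩; exact hm_nonneg k j)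
  have hτ_mem : ∀ k, τ k ∈ (v k).dom := by
    intro k
    have hsub : T k ⊆ (v k).dom := by rintro r ⟨j, _, rfl⟩; exact (hmAgree k j).1
    have := csInf_mem_closure (hT_ne k) (hT_bdd k)
    have h2 : closure (T k) ⊆ (v k).dom := by
      rw [← (v k).dom_closed.closure_eq]; exact closure_mono hsub
    exact h2 this
  have hτ_lb : ∀ k, ℓ - 2 * (1/2)^k ≤ τ k := fun k =>
    le_csInf (hT_ne k) (by rintro r ⟨j, hj, rfl⟩; exact hm_lb k j hj)
  have hτ_le_ℓ : ∀ k, τ k ≤ ℓ := by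
    intro k
    refine ge_of_tendsto hℓ (Filter.eventually_atTop.2 ⟨k, fun j hj => ?_⟩)
    exact (hτ_le_m k j hj).trans (meetLen_le_len' (hFin k j))
  have hτ_mono : ∀ {k k'}, k ≤ k' → τ k ≤ τ k' := by
    intro k k' hkk'
    refine le_csInf (hT_ne k') ?_
    rintro r ⟨j, hj, rfl⟩
    have h1 : min (meetLen (v k') (v k)) (meetLen (v k) (v j)) ≤ meetLen (v k') (v j) :=
      min_meetLen_le (hFin k' k) (hFin k j)
    have h2 : τ k ≤ meetLen (v k') (v k) := by
      rw [meetLen_comm]; exact hτ_le_m k k' hkk'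
    have h3 : τ k ≤ meetLen (v k) (v j) := hτ_le_m k j (hkk'.trans hj)
    calc τ k ≤ min (meetLen (v k') (v k)) (meetLen (v k) (v j)) := le_min h2 h3
      _ ≤ meetLen (v k') (v j) := h1
  -- the sets D k
  set D : ℕ → Set ℝ := fun k => (v k).dom ∩ Set.Icc 0 (τ k) with hD_def
  have hD_zero : ∀ k, (0:ℝ) ∈ D k := fun k => ⟨(v k).zero_mem, le_refl 0, hτ_nonneg k⟩
  have hD_τ : ∀ k, τ k ∈ D k := fun k => ⟨hτ_mem k, hτ_nonneg k, le_refl _⟩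
  have hD_mono : ∀ {k j}, k ≤ j → D k ⊆ D j := by
    intro k j hkj t ht
    obtain ⟨ht1, ht2, ht3⟩ := ht
    exact ⟨(hcross k j t ht1 (ht3.trans (hτ_le_m k j hkj))).1, ht2,
      ht3.trans (hτ_mono hkj)⟩
  have hD_flat : ∀ {i k t}, t ∈ D i → t ≤ τ k → t ∈ D k := by
    intro i k t ht htk
    rcases le_total i k with h | h
    · exact hD_mono h ht
    · obtain ⟨ht1, ht2, ht3⟩ := ht
      have : t ≤ meetLen (v i) (v k) := by
        rw [meetLen_comm]; exact htk.trans (hτ_le_m k i h)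
      exact ⟨(hcross i k t ht1 this).1, ht2, htk⟩
  have hD_closed : ∀ k, IsClosed (D k) := fun k => (v k).dom_closed.inter isClosed_Icc
  have hD_sub_Icc : ∀ k, D k ⊆ Set.Icc 0 ℓ := by
    rintro k t ⟨_, ht2, ht3⟩; exact ⟨ht2, ht3.trans (hτ_le_ℓ k)⟩
  -- endpoints converge
  have hept : ∀ k j, k ≤ j → dist (endpt (v k)) (endpt (v j)) ≤ tdist (v k) (v j) := by
    intro k j hkj
    have hmm := hmAgree k j
    have hm_le_k : meetLen (v k) (v j) ≤ (v k).len := le_len hmm.1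
    have hm_le_j : meetLen (v k) (v j) ≤ (v j).len := le_len hmm.2.1
    have heq : (v k).toFun (meetLen (v k) (v j)) = (v j).toFun (meetLen (v k) (v j)) :=
      hmm.2.2.2 ⟨hmm.1, hm_nonneg k j, le_refl _⟩
    have h1 : dist (endpt (v k)) ((v k).toFun (meetLen (v k) (v j))) ≤ (v k).len - meetLen (v k) (v j) := by
      have := dist_fun_le (len_mem (v k)) hmm.1
      rwa [abs_of_nonneg (by linarith)] at this
    have h2 : dist ((v j).toFun (meetLen (v k) (v j))) (endpt (v j)) ≤ (v j).len - meetLen (v k) (v j) := by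
      have := dist_fun_le hmm.2.1 (len_mem (v j))
      rwa [abs_of_nonpos (by linarith), neg_sub] at this
    calc dist (endpt (v k)) (endpt (v j))
        ≤ dist (endpt (v k)) ((v k).toFun (meetLen (v k) (v j))) +
          dist ((v j).toFun (meetLen (v k) (v j))) (endpt (v j)) := by
            rw [← heq]
            exact dist_triangle _ _ _
      _ ≤ ((v k).len - meetLen (v k) (v j)) + ((v j).len - meetLen (v k) (v j)) := add_le_add h1 h2
      _ = tdist (v k) (v j) := by unfold tdist; ring
  have hept_cauchy : CauchySeq (fun k => endpt (v k)) := by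
    rw [Metric.cauchySeq_iff']
    intro ε hε
    obtain ⟨k, hk⟩ := exists_pow_lt_of_lt_one hε (by norm_num : (1:ℝ)/2 < 1)
    refine ⟨k, fun n hn => ?_⟩
    rw [dist_comm]
    exact lt_trans (lt_of_le_of_lt (hept k n hn) (hd k n hn)) hk
  obtain ⟨x, hx⟩ := cauchySeq_tendsto_of_complete hept_cauchy
  -- the limit function
  set f : ℝ → X := fun t => if h : ∃ i, t ∈ D i then (v (Nat.find h)).toFun t else x
    with hf_def
  have hf_eq : ∀ i t, t ∈ D i → f t = (v i).toFun t := by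
    intro i t ht
    have h : ∃ i', t ∈ D i' := ⟨i, ht⟩
    rw [hf_def]
    simp only [dif_pos h]
    set n := Nat.find h with hn_def
    have hn : t ∈ D n := Nat.find_spec h
    rcases le_total n i with hni | hni
    · exact (hcross n i t hn.1 (hn.2.2.trans (hτ_le_m n i hni))).2
    · exact ((hcross i n t ht.1 (ht.2.2.trans (hτ_le_m i n hni))).2).symm
  have hfx : ∀ i t, t ∈ D i → dist (f t) x ≤ ℓ - t := by
    intro i t ht
    have hb : ∀ j, i ≤ j → dist (f t) x ≤ ((v j).len - t) + dist (endpt (v j)) x := by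
      intro j hij
      have htj : t ∈ D j := hD_mono hij ht
      have h1 : dist (f t) (endpt (v j)) ≤ (v j).len - t := by
        rw [hf_eq j t htj]
        have := dist_fun_le htj.1 (len_mem (v j))
        rwa [abs_of_nonpos (by linarith [le_len htj.1]), neg_sub] at this
      calc dist (f t) x ≤ dist (f t) (endpt (v j)) + dist (endpt (v j)) x :=
            dist_triangle _ _ _
        _ ≤ ((v j).len - t) + dist (endpt (v j)) x := by linarith
    have hlim : Filter.Tendsto (fun j => ((v j).len - t) + dist (endpt (v j)) x)
        Filter.atTop (nhds (ℓ - t)) := by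
      have h1 : Filter.Tendsto (fun j => (v j).len - t) Filter.atTop (nhds (ℓ - t)) :=
        hℓ.sub tendsto_const_nhds
      have h2 : Filter.Tendsto (fun j => dist (endpt (v j)) x) Filter.atTop (nhds 0) :=
        (tendsto_iff_dist_tendsto_zero.1 hx)
      simpa using h1.add h2
    exact ge_of_tendsto hlim (Filter.eventually_atTop.2 ⟨i, hb⟩)
  have hfℓ : f ℓ = x := by
    show (if h : ∃ i, ℓ ∈ D i then (v (Nat.find h)).toFun ℓ else x) = x
    split_ifs with h
    · set n := Nat.find h with hn_def
      have hn : ℓ ∈ D n := Nat.find_spec h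
      have hb : ∀ j, n ≤ j → dist ((v n).toFun ℓ) x ≤ (1/2)^j + dist (endpt (v j)) x := by
        intro j hnj
        have hℓm : ℓ ≤ meetLen (v n) (v j) := hn.2.2.trans (hτ_le_m n j hnj)
        obtain ⟨hℓj, heqj⟩ := hcross n j ℓ hn.1 hℓm
        have h1 : dist ((v j).toFun ℓ) (endpt (v j)) ≤ (1/2)^j := by
          show dist ((v j).toFun ℓ) ((v j).toFun (v j).len) ≤ (1/2)^j
          have h2 := dist_fun_le hℓj (len_mem (v j))
          have h3 : |ℓ - (v j).len| ≤ (1/2)^j := by rw [abs_sub_comm]; exact hℓk j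
          exact h2.trans h3
        calc dist ((v n).toFun ℓ) x ≤ dist ((v n).toFun ℓ) (endpt (v j)) +
              dist (endpt (v j)) x := dist_triangle _ _ _
          _ ≤ (1/2)^j + dist (endpt (v j)) x := by rw [heqj]; linarith
      have hlim : Filter.Tendsto (fun j => ((1:ℝ)/2)^j + dist (endpt (v j)) x)
          Filter.atTop (nhds 0) := by
        have h1 : Filter.Tendsto (fun j : ℕ => ((1:ℝ)/2)^j) Filter.atTop (nhds 0) :=
          tendsto_pow_atTop_nhds_zero_of_lt_one (by norm_num) (by norm_num)
        have h2 := (tendsto_iff_dist_tendsto_zero.1 hx)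
        simpa using h1.add h2
      have : dist ((v n).toFun ℓ) x ≤ 0 :=
        ge_of_tendsto hlim (Filter.eventually_atTop.2 ⟨n, hb⟩)
      exact dist_le_zero.1 this
    · rfl
  -- the limit path L
  set Ldom : Set ℝ := insert ℓ (⋃ i, D i) with hLdom_def
  have hsub : Ldom ⊆ Set.Icc 0 ℓ := by
    rintro t (rfl | ht)
    · exact ⟨hℓ0, le_refl _⟩
    · obtain ⟨i, hi⟩ := Set.mem_iUnion.1 ht
      exact hD_sub_Icc i hi
  have hflat : ∀ {k t}, t ∈ Ldom → t ≤ τ k → t ∈ D k := by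
    intro k t ht htk
    rcases Set.mem_insert_iff.1 ht with hte | ht
    · have h2 : τ k = t := le_antisymm (by rw [hte]; exact hτ_le_ℓ k) htk
      rw [← h2]; exact hD_τ k
    · obtain ⟨i, hi⟩ := Set.mem_iUnion.1 ht
      exact hD_flat hi htk
  have hclosed : IsClosed Ldom := by
    rw [← closure_subset_iff_isClosed, hLdom_def, Set.insert_eq, closure_union,
      closure_singleton]
    apply Set.union_subset (Set.subset_union_left)
    intro t ht
    have htIcc : t ∈ Set.Icc 0 ℓ := by
      have : closure (⋃ i, D i) ⊆ Set.Icc 0 ℓ :=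
        closure_minimal (Set.iUnion_subset hD_sub_Icc) isClosed_Icc
      exact this ht
    rcases eq_or_lt_of_le htIcc.2 with rfl | htℓ
    · exact Set.mem_union_left _ rfl
    · obtain ⟨k, hk⟩ : ∃ k, 2 * ((1:ℝ)/2)^k < ℓ - t := by
        obtain ⟨k, hk⟩ := exists_pow_lt_of_lt_one (show (0:ℝ) < (ℓ - t)/2 by linarith)
          (by norm_num : (1:ℝ)/2 < 1)
        exact ⟨k, by linarith⟩
      have htτ : t < τ k := by linarith [hτ_lb k]
      have h1 : Set.Iio (τ k) ∩ closure (⋃ i, D i) ⊆ closure (Set.Iio (τ k) ∩ ⋃ i, D i) :=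
        IsOpen.inter_closure isOpen_Iio
      have h2 : Set.Iio (τ k) ∩ (⋃ i, D i) ⊆ D k := by
        rintro s ⟨hs1, hs2⟩
        obtain ⟨i, hi⟩ := Set.mem_iUnion.1 hs2
        exact hD_flat hi (le_of_lt hs1)
      have h3 : t ∈ closure (D k) := closure_mono h2 (h1 ⟨htτ, ht⟩)
      rw [(hD_closed k).closure_eq] at h3
      exact Set.mem_union_right _ (Set.mem_iUnion.2 ⟨k, h3⟩)
  have hcompact : IsCompact Ldom :=
    Metric.isCompact_of_isClosed_isBounded hclosed
      ((Metric.isBounded_Icc 0 ℓ).subset hsub)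
  have hlip : LipschitzOnWith 1 f Ldom := by
    rw [lipschitzOnWith_iff_dist_le_mul]
    intro s hs t ht
    rw [NNReal.coe_one, one_mul, Real.dist_eq]
    have key : ∀ a b : ℝ, a ∈ Ldom → b ∈ Ldom → a ≤ b →
        dist (f a) (f b) ≤ |a - b| := by
      intro a b ha hb hab
      rcases Set.mem_insert_iff.1 hb with hbe | hb
      · -- b = ℓ
        rcases Set.mem_insert_iff.1 ha with hae | ha
        · rw [hae, hbe]; simp
        · obtain ⟨i, hi⟩ := Set.mem_iUnion.1 ha
          have h1 := hfx i a hi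
          have haℓ : a ≤ ℓ := (hD_sub_Icc i hi).2
          rw [hbe, hfℓ, abs_of_nonpos (by linarith), neg_sub]
          linarith
      · obtain ⟨j, hj⟩ := Set.mem_iUnion.1 hb
        rcases Set.mem_insert_iff.1 ha with hae | ha
        · -- a = ℓ, b ∈ D j, so b ≤ ℓ ≤ b hence b = ℓ
          have hbℓ : b ≤ ℓ := (hD_sub_Icc j hj).2
          have hbe : b = ℓ := le_antisymm hbℓ (by rw [← hae]; exact hab)
          rw [hae, hbe]; simp
        · obtain ⟨i, hi⟩ := Set.mem_iUnion.1 ha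
          have hiD : a ∈ D (max i j) := hD_mono (le_max_left i j) hi
          have hjD : b ∈ D (max i j) := hD_mono (le_max_right i j) hj
          rw [hf_eq (max i j) a hiD, hf_eq (max i j) b hjD]
          exact dist_fun_le hiD.1 hjD.1
    rcases le_total s t with h | h
    · exact key s t hs ht h
    · rw [dist_comm, abs_sub_comm]; exact key t s ht hs h
  set L : FPath X := ⟨Ldom, hcompact,
    Set.mem_insert_iff.2 (Or.inr (Set.mem_iUnion.2 ⟨0, hD_zero 0⟩)),
    fun t ht => (hsub ht).1, f, hlip⟩ with hL_def
  have hlenL : L.len = ℓ := by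
    apply le_antisymm
    · exact csSup_le ⟨ℓ, Set.mem_insert _ _⟩ (fun t ht => (hsub ht).2)
    · exact le_csSup hcompact.bddAbove (Set.mem_insert _ _)
  have hFinL : ∀ k, FinDist (v k) L := by
    intro k
    show (v k).toFun 0 = f 0
    exact (hf_eq k 0 (hD_zero k)).symm
  refine ⟨L, hFinL, fun k => ?_⟩
  have hAgreeL : Agree (v k) L (τ k) := by
    refine ⟨hτ_mem k, Set.mem_insert_iff.2 (Or.inr (Set.mem_iUnion.2 ⟨k, hD_τ k⟩)), ?_, ?_⟩
    · ext t
      constructor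
      · rintro ⟨ht1, ht2, ht3⟩
        exact ⟨Set.mem_insert_iff.2 (Or.inr (Set.mem_iUnion.2 ⟨k, ht1, ht2, ht3⟩)), ht2, ht3⟩
      · rintro ⟨ht1, ht2, ht3⟩
        exact ⟨(hflat ht1 ht3).1, ht2, ht3⟩
    · rintro t ⟨ht1, ht2, ht3⟩
      exact (hf_eq k t ⟨ht1, ht2, ht3⟩).symm
  have hmeetL : τ k ≤ meetLen (v k) L := le_meetLen hAgreeL
  have h1 := hℓk k
  rw [abs_le] at h1
  have h2 := hτ_lb k
  show (v k).len + L.len - 2 * meetLen (v k) L ≤ 5 * (1/2)^k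
  rw [hlenL]
  linarith [h1.2]

end FPath
/-- the extended metric `d` on `F(X)` is complete: every Cauchy
sequence (eventually pairwise finite-distance and `d`-Cauchy) converges. -/
theorem fpath_complete {X : Type*} [MetricSpace X] [CompleteSpace X]
    (u : ℕ → FPath X)
    (hCauchy : ∀ ε : ℝ, 0 < ε → ∃ N : ℕ, ∀ m ≥ N, ∀ n ≥ N,
      (u m).FinDist (u n) ∧ (u m).tdist (u n) < ε) :
    ∃ L : FPath X, ∀ ε : ℝ, 0 < ε → ∃ N : ℕ, ∀ n ≥ N,
      (u n).FinDist L ∧ (u n).tdist L < ε := by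
  classical
  choose N hN using fun k : ℕ => hCauchy ((1/2)^k) (by positivity)
  set φ : ℕ → ℕ := fun k => (Finset.range (k+1)).sup N with hφ_def
  have hφ_ge : ∀ {i k : ℕ}, i ≤ k → N i ≤ φ k := fun {i k} h =>
    Finset.le_sup (Finset.mem_range.2 (Nat.lt_succ_of_le h))
  set v : ℕ → FPath X := fun k => u (φ k) with hv_def
  have hFin : ∀ j k, (v j).FinDist (v k) := fun j k =>
    (hN 0 _ (hφ_ge (Nat.zero_le j)) _ (hφ_ge (Nat.zero_le k))).1
  have hd : ∀ k j, k ≤ j → (v k).tdist (v j) < (1/2)^k := fun k j hkj =>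
    (hN k _ (hφ_ge (le_refl k)) _ (hφ_ge hkj)).2
  obtain ⟨L, hFinL, hdL⟩ := FPath.exists_limit v hFin hd
  refine ⟨L, ?_⟩
  intro ε hε
  obtain ⟨k, hk⟩ := exists_pow_lt_of_lt_one (show (0:ℝ) < ε/7 by linarith)
    (by norm_num : (1:ℝ)/2 < 1)
  refine ⟨N k, fun n hn => ?_⟩
  have h1 := hN k n hn (φ k) (hφ_ge (le_refl k))
  have hFin2 : (u n).FinDist (v k) := h1.1
  refine ⟨FPath.FinDist.trans hFin2 (hFinL k), ?_⟩
  have h2 := FPath.tdist_triangle3 hFin2 (hFinL k)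
  have h3 : (u n).tdist (v k) < (1/2)^k := h1.2
  have h4 := hdL k
  have h5 : (0:ℝ) < (1/2)^k := by positivity
  calc (u n).tdist L ≤ (u n).tdist (v k) + (v k).tdist L := h2
    _ < (1/2)^k + 5*(1/2)^k := by linarith
    _ < ε := by linarith
end

section
/- Any compact topometric space (X, τ, ∂) with an open metric has finite diameter: sup{∂(x,y) : x,y ∈ X} < ∞. -/
open Set Topology

/-- `(X, t, dist)` is a topometric space: `t` is a topology on the metric space `X`,
the metric topology refines `t`, and the metric is lower semi-continuous w.r.t. `t × t`. -/
def IsTopometric {X : Type*} [MetricSpace X] (t : TopologicalSpace X) : Prop :=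
  ((inferInstance : TopologicalSpace X) ≤ t) ∧
    ∀ ε : ℝ, 0 < ε →
      IsClosed[@instTopologicalSpaceProd X X t t] {p : X × X | dist p.1 p.2 ≤ ε}

/-- The metric is open w.r.t. `t`: for every `t`-open `U` and `ε > 0`,
`U^{<ε} = {z : ∂(z,U) < ε}` is `t`-open. -/
def HasOpenMetric {X : Type*} [MetricSpace X] (t : TopologicalSpace X) : Prop :=
  ∀ U : Set X, IsOpen[t] U → ∀ ε : ℝ, 0 < ε →
    IsOpen[t] {z : X | ∃ u ∈ U, dist z u < ε}

/-- a compact topometric space with an open metric has finite diameter. -/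
theorem topometric_finite_diam {X : Type*} [MetricSpace X] (t : TopologicalSpace X)
    (hcomp : @CompactSpace X t) (htm : IsTopometric t) (hopen : HasOpenMetric t) :
    ∃ D : ℝ, ∀ x y : X, dist x y ≤ D := by
  obtain ⟨hle, hlsc⟩ := htm
  classical
  rcases isEmpty_or_nonempty X with hX | hX
  · exact ⟨0, fun x => (hX.false x).elim⟩
  obtain ⟨x₀⟩ := hX
  haveI : Nonempty X := ⟨x₀⟩
  letI : TopologicalSpace X := t
  -- t is T2
  haveI ht2 : T2Space X := by
    rw [t2_iff_isClosed_diagonal]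
    have : diagonal X = ⋂ n : ℕ, {p : X × X | dist p.1 p.2 ≤ 1 / (n + 1)} := by
      ext ⟨x, y⟩
      simp only [mem_diagonal_iff, mem_iInter, mem_setOf_eq]
      constructor
      · rintro rfl n; simp; positivity
      · intro h
        have : dist x y ≤ 0 := by
          by_contra hlt
          push_neg at hlt
          obtain ⟨n, hn⟩ := exists_nat_one_div_lt hlt
          exact absurd (h n) (by push_neg; exact_mod_cast hn)
        exact dist_le_zero.mp this
    rw [this]
    exact isClosed_iInter fun n => hlsc _ (by positivity)
  -- closed balls around x₀ are closed
  have hball : ∀ r : ℝ, 0 < r → IsClosed {y : X | dist x₀ y ≤ r} := by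
    intro r hr
    have hc : Continuous fun y : X => ((x₀, y) : X × X) := continuous_const.prodMk continuous_id
    exact (hlsc r hr).preimage hc
  -- Baire: some ball has nonempty interior
  have hcover : (⋃ n : ℕ, {y : X | dist x₀ y ≤ n + 1}) = univ := by
    ext y; simp only [mem_iUnion, mem_setOf_eq, mem_univ, iff_true]
    obtain ⟨n, hn⟩ := exists_nat_ge (dist x₀ y)
    exact ⟨n, hn.trans (by linarith)⟩
  obtain ⟨N, hN⟩ := nonempty_interior_of_iUnion_of_closed
    (fun n : ℕ => hball (n + 1) (by positivity)) hcover
  set U := interior {y : X | dist x₀ y ≤ (N : ℝ) + 1} with hU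
  have hUopen : IsOpen U := isOpen_interior
  obtain ⟨u₀, hu₀⟩ := hN
  -- the sets U^{<n+1} cover X
  have hWcover : (⋃ n : ℕ, {z : X | ∃ u ∈ U, dist z u < n + 1}) = univ := by
    ext z; simp only [mem_iUnion, mem_univ, iff_true, mem_setOf_eq]
    obtain ⟨n, hn⟩ := exists_nat_gt (dist z u₀)
    exact ⟨n, u₀, hu₀, hn.trans_le (by linarith)⟩
  have := hcomp
  obtain ⟨s, hs⟩ := isCompact_univ.elim_finite_subcover
    (fun n : ℕ => {z : X | ∃ u ∈ U, dist z u < n + 1})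
    (fun n => hopen U hUopen _ (by positivity)) hWcover.ge
  -- monotone, so a single M works
  have hmono : Monotone (fun n : ℕ => {z : X | ∃ u ∈ U, dist z u < (n : ℝ) + 1}) := by
    intro a b hab z hz
    obtain ⟨u, hu, hd⟩ := hz
    have hc : (a : ℝ) ≤ b := Nat.cast_le.mpr hab
    exact ⟨u, hu, hd.trans_le (by linarith)⟩
  rcases s.eq_empty_or_nonempty with hse | hse
  · subst hse
    exact absurd (hs (mem_univ x₀)) (by simp)
  obtain ⟨M, hM, hMmax⟩ := s.exists_max_image id hse
  have hall : ∀ x : X, ∃ u ∈ U, dist x u < M + 1 := by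
    intro x
    have := hs (mem_univ x)
    simp only [mem_iUnion, exists_prop] at this
    obtain ⟨i, hi, hx⟩ := this
    exact hmono (hMmax i hi) hx
  refine ⟨2 * ((M : ℝ) + 1 + (N + 1)), fun x y => ?_⟩
  have hbd : ∀ z : X, dist z x₀ ≤ M + 1 + (N + 1) := by
    intro z
    obtain ⟨u, hu, hd⟩ := hall z
    have h2 : dist x₀ u ≤ (N : ℝ) + 1 := interior_subset (s := {y : X | dist x₀ y ≤ (N : ℝ) + 1}) hu
    calc dist z x₀ ≤ dist z u + dist u x₀ := dist_triangle _ _ _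
      _ ≤ (M + 1) + (N + 1) := add_le_add hd.le (dist_comm u x₀ ▸ h2)
  calc dist x y ≤ dist x x₀ + dist x₀ y := dist_triangle _ _ _
    _ ≤ (M + 1 + (N + 1)) + (M + 1 + (N + 1)) := add_le_add (hbd x) (dist_comm x₀ y ▸ hbd y)
    _ = 2 * ((M : ℝ) + 1 + (N + 1)) := by ring
end

section
/- In a compact topometric space, for any two distinct points x, y there exist open neighborhoods U ∋ x and V ∋ y and ε > 0 such that U^{<ε} ∩ V = ∅; more generally, for any x ≠ y and any r < ∂(x,y) there are open neighborhoods U ∋ x, V ∋ y with cl(U)^{≤r} ∩ cl(V) = ∅. -/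
open Set Topology

/-- separation in compact topometric spaces: distinct points have open
neighborhoods `U ∋ x`, `V ∋ y` with `U^{<ε} ∩ V = ∅`; more generally for any
`r < ∂(x,y)` there are `U, V` with `cl(U)^{≤r} ∩ cl(V) = ∅`. -/
theorem topometric_separation {X : Type*} [MetricSpace X] (t : TopologicalSpace X)
    (hcomp : @CompactSpace X t) (htm : IsTopometric t)
    (x y : X) (hxy : x ≠ y) :
    (∃ ε : ℝ, 0 < ε ∧ ∃ U V : Set X, IsOpen[t] U ∧ IsOpen[t] V ∧ x ∈ U ∧ y ∈ V ∧
      {z : X | ∃ u ∈ U, dist z u < ε} ∩ V = ∅) ∧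
    (∀ r : ℝ, r < dist x y → ∃ U V : Set X, IsOpen[t] U ∧ IsOpen[t] V ∧ x ∈ U ∧ y ∈ V ∧
      {z : X | ∃ u ∈ @closure X t U, dist z u ≤ r} ∩ @closure X t V = ∅) := by

  letI : TopologicalSpace X := t
  haveI : CompactSpace X := hcomp
  have hd : 0 < dist x y := dist_pos.2 hxy
  -- t is Hausdorff
  haveI hT2 : T2Space X := by
    constructor
    intro a b hab
    have hd' : 0 < dist a b := dist_pos.2 hab
    have hC := (htm.2 (dist a b / 2) (by linarith)).isOpen_compl
    obtain ⟨U, V, hU, hV, ha, hb, hsub⟩ := isOpen_prod_iff.1 hC a b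
      (by simp only [mem_compl_iff, mem_setOf_eq]; push_neg; linarith)
    refine ⟨U, V, hU, hV, ha, hb, Set.disjoint_left.2 fun z hzU hzV => ?_⟩
    have := hsub (Set.mk_mem_prod hzU hzV)
    simp only [mem_compl_iff, mem_setOf_eq, dist_self] at this
    exact this (by linarith)
  have main : ∀ r : ℝ, r < dist x y → ∃ U V : Set X, IsOpen U ∧ IsOpen V ∧ x ∈ U ∧ y ∈ V ∧
      {z : X | ∃ u ∈ closure U, dist z u ≤ r} ∩ closure V = ∅ := by
    intro r hr
    set r' : ℝ := (max r 0 + dist x y) / 2 with hr'def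
    have hmax : max r 0 < dist x y := max_lt hr hd
    have hr'0 : 0 < r' := by
      have : (0:ℝ) ≤ max r 0 := le_max_right r 0
      simp only [hr'def]; linarith
    have hrr' : r ≤ r' := by
      have : r ≤ max r 0 := le_max_left r 0
      simp only [hr'def]; linarith
    have hr'd : r' < dist x y := by simp only [hr'def]; linarith
    have hC := (htm.2 r' hr'0).isOpen_compl
    obtain ⟨U₀, V₀, hU₀, hV₀, hx₀, hy₀, hsub⟩ := isOpen_prod_iff.1 hC x y
      (by simp only [mem_compl_iff, mem_setOf_eq]; push_neg; exact hr'd)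
    obtain ⟨U₁, hU₁nhds, hU₁closed, hU₁sub⟩ :=
      exists_mem_nhds_isClosed_subset (hU₀.mem_nhds hx₀)
    obtain ⟨V₁, hV₁nhds, hV₁closed, hV₁sub⟩ :=
      exists_mem_nhds_isClosed_subset (hV₀.mem_nhds hy₀)
    refine ⟨interior U₁, interior V₁, isOpen_interior, isOpen_interior,
      mem_interior_iff_mem_nhds.2 hU₁nhds, mem_interior_iff_mem_nhds.2 hV₁nhds, ?_⟩
    ext z
    simp only [mem_inter_iff, mem_setOf_eq, mem_empty_iff_false, iff_false, not_and]
    rintro ⟨u, hu, hdzu⟩ hzV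
    have huU₀ : u ∈ U₀ := hU₁sub ((closure_minimal interior_subset hU₁closed) hu)
    have hzV₀ : z ∈ V₀ := hV₁sub ((closure_minimal interior_subset hV₁closed) hzV)
    have := hsub (Set.mk_mem_prod huU₀ hzV₀)
    simp only [mem_compl_iff, mem_setOf_eq] at this
    exact this (by rw [dist_comm] at hdzu; linarith)
  refine ⟨?_, main⟩
  obtain ⟨U, V, hU, hV, hxU, hyV, hempty⟩ := main (dist x y / 2) (by linarith)
  refine ⟨dist x y / 2, by linarith, U, V, hU, hV, hxU, hyV, ?_⟩
  apply Set.eq_empty_of_subset_empty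
  rw [← hempty]
  rintro z ⟨⟨u, hu, hdzu⟩, hzV⟩
  exact ⟨⟨u, subset_closure hu, le_of_lt hdzu⟩, subset_closure hzV⟩
end
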